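/- arXiv:2310.06253 — 2 statements merged into one kernel-verified Lean document; each statement's English description precedes it below -/
import Mathlib

section
/- If the value-function class 𝒱 spans all of ℝ^S (e.g., contains the indicator functions of all states) and Π contains, for each action a, the deterministic policy that always plays a, then the only model value-equivalent to M with respect to (Π, 𝒱) is M itself. -/
/-- If the value-function class contains all state indicators and the policy
class contains all deterministic constant-action policies, then the only
value-equivalent model is the true model M itself. -/
theorem value_equivalence_identifiability {S A : Type} [Fintype S] [Fintype A]
    [DecidableEq S] [DecidableEq A]
    (M Mhat : S → A → S → ℝ)
    (Pol : Set (S → A → ℝ)) (𝒱 : Set (S → ℝ))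
    (hind : ∀ s' : S, (fun x => if x = s' then (1 : ℝ) else 0) ∈ 𝒱)
    (hdet : ∀ a : A, (fun _ a' => if a' = a then (1 : ℝ) else 0) ∈ Pol)
    (hVE : ∀ π ∈ Pol, ∀ V ∈ 𝒱, ∀ s : S,
      (∑ a, π s a * ∑ s', Mhat s a s' * V s') = ∑ a, π s a * ∑ s', M s a s' * V s') :
    Mhat = M := by
  funext s a s'
  have h := hVE _ (hdet a) _ (hind s') s
  simpa [mul_ite, ite_mul, Finset.sum_ite_eq', Finset.mem_univ] using h
end

section
/- Policy evaluation error bound (simulation lemma with policy shift): given an MDP with |R(s,a)| ≤ R_max and dynamics M, behavior policy π_b, learned model M̂ with E_{(s,a)∼d_M^{π_b}} D_KL[M(·|s,a) ∥ M̂(·|s,a)] ≤ ε_M̂, and any policy π with max_s D_KL[π(·|s) ∥ π_b(·|s)] ≤ ε_π, the evaluation error satisfies |J_{M̂}(π) − J_M(π)| ≤ (√2 γ R_max/(1−γ)²)√ε_M̂ + (2√2 γ R_max/(1−γ)²)√ε_π. -/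
set_option maxHeartbeats 1000000

open Finset

namespace SimLemmaAux

lemma mul_log_key (x : ℝ) (hx : 0 ≤ x) :
    3 * (x - 1) ^ 2 / (2 * (x + 2)) ≤ x * Real.log x - x + 1 := by
  set G : ℝ → ℝ := fun y => y * Real.log y - y + 1 - 3 * (y - 1) ^ 2 / (2 * (y + 2)) with hG
  set H : ℝ → ℝ := fun y => Real.log y - 3 * ((y - 1) * (y + 5)) / (2 * (y + 2) ^ 2) with hHdef
  have hzero : G 1 = 0 := by simp [hG]
  rcases hx.eq_or_lt' with h0 | hxpos
  · subst h0; norm_num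
  suffices h : 0 ≤ G x by
    simp only [hG] at h; linarith
  have hGderiv : ∀ y : ℝ, 0 < y → HasDerivAt G (H y) y := by
    intro y hy
    have h2 : (2 : ℝ) * (y + 2) ≠ 0 := by positivity
    have hylog : HasDerivAt (fun z : ℝ => z * Real.log z) (Real.log y + 1) y := by
      have := (hasDerivAt_id y).fun_mul (Real.hasDerivAt_log hy.ne')
      simpa [mul_inv_cancel₀ hy.ne'] using this
    have hnum : HasDerivAt (fun z : ℝ => 3 * (z - 1) ^ 2) (6 * (y - 1)) y := by
      have h1 : HasDerivAt (fun z : ℝ => (z - 1)) 1 y := (hasDerivAt_id y).sub_const 1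
      have h3 := (h1.fun_pow 2).const_mul (3 : ℝ)
      exact h3.congr_deriv (by ring)
    have hden : HasDerivAt (fun z : ℝ => 2 * (z + 2)) 2 y := by
      have h1 : HasDerivAt (fun z : ℝ => (z + 2)) 1 y := (hasDerivAt_id y).add_const 2
      simpa using h1.const_mul (2 : ℝ)
    have hdiv : HasDerivAt (fun z : ℝ => 3 * (z - 1) ^ 2 / (2 * (z + 2)))
        ((6 * (y - 1) * (2 * (y + 2)) - 3 * (y - 1) ^ 2 * 2) / (2 * (y + 2)) ^ 2) y :=
      hnum.div hden h2
    have h3 := ((hylog.sub (hasDerivAt_id y)).add_const 1).sub hdiv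
    have heq : H y = Real.log y + 1 - 1 -
        (6 * (y - 1) * (2 * (y + 2)) - 3 * (y - 1) ^ 2 * 2) / (2 * (y + 2)) ^ 2 := by
      rw [hHdef]
      have hne : (y + 2) ≠ 0 := by positivity
      field_simp
      ring
    rw [hG, heq]
    exact h3
  have hHderiv : ∀ y : ℝ, 0 < y → HasDerivAt H (1 / y - 27 / (y + 2) ^ 3) y := by
    intro y hy
    have h2 : (2 : ℝ) * (y + 2) ^ 2 ≠ 0 := by positivity
    have hlog : HasDerivAt Real.log y⁻¹ y := Real.hasDerivAt_log hy.ne'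
    have hnum : HasDerivAt (fun z : ℝ => 3 * ((z - 1) * (z + 5))) (3 * (2 * y + 4)) y := by
      have h1 : HasDerivAt (fun z : ℝ => (z - 1)) 1 y := (hasDerivAt_id y).sub_const 1
      have h5 : HasDerivAt (fun z : ℝ => (z + 5)) 1 y := (hasDerivAt_id y).add_const 5
      have h3 := (h1.fun_mul h5).const_mul (3 : ℝ)
      exact h3.congr_deriv (by ring)
    have hden : HasDerivAt (fun z : ℝ => 2 * (z + 2) ^ 2) (4 * (y + 2)) y := by
      have h1 : HasDerivAt (fun z : ℝ => (z + 2)) 1 y := (hasDerivAt_id y).add_const 2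
      have h3 := (h1.fun_pow 2).const_mul (2 : ℝ)
      exact h3.congr_deriv (by ring)
    have hdiv := hnum.div hden h2
    have h3 := hlog.sub hdiv
    have heq : 1 / y - 27 / (y + 2) ^ 3 = y⁻¹ -
        (3 * (2 * y + 4) * (2 * (y + 2) ^ 2) - 3 * ((y - 1) * (y + 5)) * (4 * (y + 2))) /
          (2 * (y + 2) ^ 2) ^ 2 := by
      have hne : (y + 2) ≠ 0 := by positivity
      field_simp
      ring
    rw [hHdef, heq]
    exact h3
  have hHmono : MonotoneOn H (Set.Ioi (0 : ℝ)) := by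
    refine monotoneOn_of_deriv_nonneg (convex_Ioi 0) ?_ ?_ ?_
    · intro y hy
      exact (hHderiv y hy).continuousAt.continuousWithinAt
    · intro y hy
      rw [interior_Ioi] at hy
      exact (hHderiv y hy).differentiableAt.differentiableWithinAt
    · intro y hy
      rw [interior_Ioi] at hy
      rw [(hHderiv y hy).deriv]
      have h1 : (y + 2) ^ 3 - 27 * y = (y - 1) ^ 2 * (y + 8) := by ring
      have h2 : 0 < y := hy
      have h3 : (0:ℝ) < (y + 2) ^ 3 := by positivity
      rw [sub_nonneg, div_le_div_iff₀ h3 h2]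
      nlinarith [sq_nonneg (y - 1)]
  have hH1 : H 1 = 0 := by simp [hHdef]
  -- G is antitone on (0,1] and monotone on [1,∞)
  have hGanti : AntitoneOn G (Set.Ioc (0:ℝ) 1) := by
    refine antitoneOn_of_deriv_nonpos (convex_Ioc 0 1) ?_ ?_ ?_
    · intro y hy
      exact (hGderiv y hy.1).continuousAt.continuousWithinAt
    · intro y hy
      rw [interior_Ioc] at hy
      exact (hGderiv y hy.1).differentiableAt.differentiableWithinAt
    · intro y hy
      rw [interior_Ioc] at hy
      rw [(hGderiv y hy.1).deriv]
      have := hHmono (Set.mem_Ioi.2 hy.1) (Set.mem_Ioi.2 one_pos) hy.2.le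
      rw [hH1] at this
      exact this
  have hGmono : MonotoneOn G (Set.Ici (1:ℝ)) := by
    refine monotoneOn_of_deriv_nonneg (convex_Ici 1) ?_ ?_ ?_
    · intro y hy
      exact (hGderiv y (lt_of_lt_of_le one_pos hy)).continuousAt.continuousWithinAt
    · intro y hy
      rw [interior_Ici] at hy
      exact (hGderiv y (lt_trans one_pos hy)).differentiableAt.differentiableWithinAt
    · intro y hy
      rw [interior_Ici] at hy
      rw [(hGderiv y (lt_trans one_pos hy)).deriv]
      have := hHmono (Set.mem_Ioi.2 one_pos) (Set.mem_Ioi.2 (lt_trans one_pos hy)) hy.le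
      rw [hH1] at this
      exact this
  rcases le_total x 1 with hx1 | hx1
  · have := hGanti (Set.mem_Ioc.2 ⟨hxpos, hx1⟩) (Set.mem_Ioc.2 ⟨one_pos, le_refl 1⟩) hx1
    rw [hzero] at this
    exact this
  · have := hGmono (Set.mem_Ici.2 (le_refl 1)) (Set.mem_Ici.2 hx1) hx1
    rw [hzero] at this
    exact this


/-- Pointwise Pinsker summand. -/
lemma pointwise_key (p q : ℝ) (hp : 0 ≤ p) (hq : 0 ≤ q) (hac : 0 < p → 0 < q) :
    3 * (p - q) ^ 2 / (2 * (p + 2 * q)) ≤ p * Real.log (p / q) - p + q := by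
  rcases hq.eq_or_lt' with hq0 | hqpos
  · have hp0 : p = 0 := by
      by_contra h
      have h2 := hac (hp.lt_of_ne (Ne.symm h))
      rw [hq0] at h2
      exact absurd h2 (lt_irrefl 0)
    simp [hp0, hq0]
  · have hkey := mul_log_key (p / q) (div_nonneg hp hqpos.le)
    have h1 := mul_le_mul_of_nonneg_left hkey hqpos.le
    have e1 : q * (p / q * Real.log (p / q) - p / q + 1) = p * Real.log (p / q) - p + q := by
      field_simp
    have e2 : q * (3 * (p / q - 1) ^ 2 / (2 * (p / q + 2))) =
        3 * (p - q) ^ 2 / (2 * (p + 2 * q)) := by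
      have h2 : p + 2 * q > 0 := by linarith
      field_simp
    rw [e1, e2] at h1
    exact h1

/-- Nonnegativity of finite KL. -/
lemma kl_nonneg {ι : Type*} [Fintype ι] (p q : ι → ℝ) (hp : ∀ i, 0 ≤ p i) (hq : ∀ i, 0 ≤ q i)
    (hp1 : ∑ i, p i = 1) (hq1 : ∑ i, q i = 1) (hac : ∀ i, 0 < p i → 0 < q i) :
    0 ≤ ∑ i, p i * Real.log (p i / q i) := by
  have h : ∀ i : ι, (0:ℝ) ≤ p i * Real.log (p i / q i) - p i + q i := by
    intro i
    have := pointwise_key (p i) (q i) (hp i) (hq i) (hac i)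
    have h2 : (0:ℝ) ≤ 3 * (p i - q i) ^ 2 / (2 * (p i + 2 * q i)) := by
      apply div_nonneg (by positivity)
      have := hp i; have := hq i; linarith
    linarith
  have hsum := Finset.sum_nonneg (fun i (_ : i ∈ univ) => h i)
  rw [Finset.sum_add_distrib, Finset.sum_sub_distrib] at hsum
  rw [hp1, hq1] at hsum
  linarith

/-- Finite Pinsker inequality. -/
lemma pinsker {ι : Type*} [Fintype ι] (p q : ι → ℝ) (hp : ∀ i, 0 ≤ p i) (hq : ∀ i, 0 ≤ q i)
    (hp1 : ∑ i, p i = 1) (hq1 : ∑ i, q i = 1) (hac : ∀ i, 0 < p i → 0 < q i) :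
    ∑ i, |p i - q i| ≤ Real.sqrt (2 * ∑ i, p i * Real.log (p i / q i)) := by
  set KL := ∑ i, p i * Real.log (p i / q i) with hKL
  have hCS : (∑ i, |p i - q i|) ^ 2 ≤
      (∑ i, (p i + 2 * q i)) * ∑ i, (p i - q i) ^ 2 / (p i + 2 * q i) := by
    refine Finset.sum_sq_le_sum_mul_sum_of_sq_eq_mul univ ?_ ?_ ?_
    · intro i _; have := hp i; have := hq i; linarith
    · intro i _
      have h1 : 0 ≤ p i + 2 * q i := by have := hp i; have := hq i; linarith
      positivity
    · intro i _
      rcases eq_or_ne (p i + 2 * q i) 0 with h0 | h0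
      · have hpi : p i = 0 := by have := hp i; have := hq i; linarith
        have hqi : q i = 0 := by have := hp i; have := hq i; linarith
        simp [hpi, hqi]
      · rw [sq_abs]
        field_simp
        exact (mul_div_cancel_right₀ _ (by rwa [mul_comm (2:ℝ) (q i)] at h0)).symm
  have hsum3 : (∑ i, (p i + 2 * q i)) = 3 := by
    rw [Finset.sum_add_distrib, hp1, ← Finset.mul_sum, hq1]; norm_num
  have hterm : ∑ i, (p i - q i) ^ 2 / (p i + 2 * q i) ≤ (2/3) * ∑ i, (p i * Real.log (p i / q i) - p i + q i) := by
    rw [Finset.mul_sum]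
    refine Finset.sum_le_sum ?_
    intro i _
    have hkey := pointwise_key (p i) (q i) (hp i) (hq i) (hac i)
    have h1 : (p i - q i) ^ 2 / (p i + 2 * q i) = (2/3) * (3 * (p i - q i) ^ 2 / (2 * (p i + 2 * q i))) := by
      rcases eq_or_ne (p i + 2 * q i) 0 with h0 | h0
      · rw [h0]; simp
      · field_simp
    rw [h1]
    have : (0:ℝ) ≤ 2/3 := by norm_num
    exact mul_le_mul_of_nonneg_left hkey this
  have hsimp : ∑ i, (p i * Real.log (p i / q i) - p i + q i) = KL := by
    rw [Finset.sum_add_distrib, Finset.sum_sub_distrib, hp1, hq1, hKL]; ring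
  rw [hsimp] at hterm
  have hfinal : (∑ i, |p i - q i|) ^ 2 ≤ 2 * KL := by
    calc (∑ i, |p i - q i|) ^ 2 ≤ (∑ i, (p i + 2 * q i)) * ∑ i, (p i - q i) ^ 2 / (p i + 2 * q i) := hCS
    _ = 3 * ∑ i, (p i - q i) ^ 2 / (p i + 2 * q i) := by rw [hsum3]
    _ ≤ 3 * ((2/3) * KL) := by
        have h3 : (0:ℝ) ≤ 3 := by norm_num
        exact mul_le_mul_of_nonneg_left hterm h3
    _ = 2 * KL := by ring
  have habs : 0 ≤ ∑ i, |p i - q i| := Finset.sum_nonneg (fun i _ => abs_nonneg _)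
  have := Real.sqrt_le_sqrt hfinal
  rwa [Real.sqrt_sq habs] at this


lemma exists_value {S A : Type} [Fintype S] [Fintype A] [Nonempty S]
    (P : S → A → S → ℝ) (pi : S → A → ℝ) (R : S → A → ℝ) (γ Rmax : ℝ)
    (hγ0 : 0 ≤ γ) (hγ1 : γ < 1)
    (hP0 : ∀ s a s', 0 ≤ P s a s') (hP1 : ∀ s a, ∑ s', P s a s' = 1)
    (hπ0 : ∀ s a, 0 ≤ pi s a) (hπ1 : ∀ s, ∑ a, pi s a = 1)
    (hR : ∀ s a, |R s a| ≤ Rmax) :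
    ∃ V : S → ℝ, (∀ s, V s = ∑ a, pi s a * (R s a + γ * ∑ s', P s a s' * V s'))
      ∧ ∀ s, |V s| ≤ Rmax / (1 - γ) := by
  have h1γ : 0 < 1 - γ := by linarith
  set f : (S → ℝ) → (S → ℝ) :=
    fun V s => ∑ a, pi s a * (R s a + γ * ∑ s', P s a s' * V s') with hf
  have key : ∀ (V W : S → ℝ) (s : S), |f V s - f W s| ≤ γ * dist V W := by
    intro V W s
    have hdiff : f V s - f W s = ∑ a, pi s a * (γ * ∑ s', P s a s' * (V s' - W s')) := by
      rw [hf, ← Finset.sum_sub_distrib]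
      refine Finset.sum_congr rfl (fun a _ => ?_)
      have h2 : ∑ s', P s a s' * (V s' - W s') =
          (∑ s', P s a s' * V s') - ∑ s', P s a s' * W s' := by
        rw [← Finset.sum_sub_distrib]
        exact Finset.sum_congr rfl (fun s' _ => by ring)
      rw [h2]; ring
    rw [hdiff]
    calc |∑ a, pi s a * (γ * ∑ s', P s a s' * (V s' - W s'))|
        ≤ ∑ a, |pi s a * (γ * ∑ s', P s a s' * (V s' - W s'))| :=
          Finset.abs_sum_le_sum_abs _ _
      _ ≤ ∑ a, pi s a * (γ * dist V W) := by
          refine Finset.sum_le_sum (fun a _ => ?_)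
          rw [abs_mul, abs_of_nonneg (hπ0 s a), abs_mul, abs_of_nonneg hγ0]
          refine mul_le_mul_of_nonneg_left ?_ (hπ0 s a)
          refine mul_le_mul_of_nonneg_left ?_ hγ0
          calc |∑ s', P s a s' * (V s' - W s')|
              ≤ ∑ s', |P s a s' * (V s' - W s')| := Finset.abs_sum_le_sum_abs _ _
            _ ≤ ∑ s', P s a s' * dist V W := by
                refine Finset.sum_le_sum (fun s' _ => ?_)
                rw [abs_mul, abs_of_nonneg (hP0 s a s')]
                refine mul_le_mul_of_nonneg_left ?_ (hP0 s a s')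
                rw [← Real.dist_eq]
                exact dist_le_pi_dist V W s'
            _ = dist V W := by rw [← Finset.sum_mul, hP1 s a, one_mul]
      _ = γ * dist V W := by rw [← Finset.sum_mul, hπ1 s, one_mul]
  have hlip : LipschitzWith ⟨γ, hγ0⟩ f := by
    apply LipschitzWith.of_dist_le_mul
    intro V W
    change dist (f V) (f W) ≤ γ * dist V W
    rw [dist_pi_le_iff (by positivity)]
    intro s
    rw [Real.dist_eq]
    exact key V W s
  have hcontr : ContractingWith ⟨γ, hγ0⟩ f := ⟨by exact_mod_cast hγ1, hlip⟩
  set V := hcontr.fixedPoint f with hV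
  have hfix : f V = V := hcontr.fixedPoint_isFixedPt
  have hfixs : ∀ s, V s = ∑ a, pi s a * (R s a + γ * ∑ s', P s a s' * V s') := by
    intro s
    conv_lhs => rw [← hfix]
  refine ⟨V, hfixs, ?_⟩
  -- sup bound
  have hne : (Finset.univ : Finset S).Nonempty := Finset.univ_nonempty
  obtain ⟨s₀, _, hs₀⟩ := Finset.exists_mem_eq_sup' hne (fun s => |V s|)
  set B := Finset.univ.sup' hne (fun s => |V s|) with hB
  have hVB : ∀ s, |V s| ≤ B := fun s => Finset.le_sup' (fun s => |V s|) (Finset.mem_univ s)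
  have hbound : B ≤ Rmax + γ * B := by
    calc B = |V s₀| := hs₀
      _ = |∑ a, pi s₀ a * (R s₀ a + γ * ∑ s', P s₀ a s' * V s')| := by rw [← hfixs]
      _ ≤ ∑ a, |pi s₀ a * (R s₀ a + γ * ∑ s', P s₀ a s' * V s')| := Finset.abs_sum_le_sum_abs _ _
      _ ≤ ∑ a, pi s₀ a * (Rmax + γ * B) := by
          refine Finset.sum_le_sum (fun a _ => ?_)
          rw [abs_mul, abs_of_nonneg (hπ0 s₀ a)]
          refine mul_le_mul_of_nonneg_left ?_ (hπ0 s₀ a)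
          calc |R s₀ a + γ * ∑ s', P s₀ a s' * V s'|
              ≤ |R s₀ a| + |γ * ∑ s', P s₀ a s' * V s'| := abs_add_le _ _
            _ ≤ Rmax + γ * B := by
                refine add_le_add (hR s₀ a) ?_
                rw [abs_mul, abs_of_nonneg hγ0]
                refine mul_le_mul_of_nonneg_left ?_ hγ0
                calc |∑ s', P s₀ a s' * V s'| ≤ ∑ s', |P s₀ a s' * V s'| :=
                      Finset.abs_sum_le_sum_abs _ _
                  _ ≤ ∑ s', P s₀ a s' * B := by
                      refine Finset.sum_le_sum (fun s' _ => ?_)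
                      rw [abs_mul, abs_of_nonneg (hP0 s₀ a s')]
                      exact mul_le_mul_of_nonneg_left (hVB s') (hP0 s₀ a s')
                  _ = B := by rw [← Finset.sum_mul, hP1 s₀ a, one_mul]
      _ = Rmax + γ * B := by rw [← Finset.sum_mul, hπ1 s₀, one_mul]
  intro s
  refine le_trans (hVB s) ?_
  rw [le_div_iff₀ h1γ]
  nlinarith [hbound]

/-- Bellman-flow occupancies are nonnegative and sum to 1. -/
lemma occ_props {S A : Type} [Fintype S] [Fintype A]
    (M : S → A → S → ℝ) (ρ : S → A → ℝ) (μ : S → ℝ) (γ : ℝ)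
    (hγ0 : 0 ≤ γ) (hγ1 : γ < 1)
    (hM0 : ∀ s a s', 0 ≤ M s a s') (hM1 : ∀ s a, ∑ s', M s a s' = 1)
    (hρ0 : ∀ s a, 0 ≤ ρ s a) (hρ1 : ∀ s, ∑ a, ρ s a = 1)
    (hμ0 : ∀ s, 0 ≤ μ s) (hμ1 : ∑ s, μ s = 1)
    (d : S → A → ℝ)
    (hd : ∀ s a, d s a = ρ s a * ((1 - γ) * μ s + γ * ∑ s₀, ∑ a₀, d s₀ a₀ * M s₀ a₀ s)) :
    (∀ s a, 0 ≤ d s a) ∧ (∑ s, ∑ a, d s a = 1) := by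
  have h1γ : 0 < 1 - γ := by linarith
  -- nonnegativity via the negative part argument
  set n : S → A → ℝ := fun s a => max 0 (-(d s a)) with hn
  have hn0 : ∀ s a, 0 ≤ n s a := fun s a => le_max_left _ _
  have hdgen : ∀ s a, -(d s a) ≤ γ * (ρ s a * ∑ s₀, ∑ a₀, n s₀ a₀ * M s₀ a₀ s) := by
    intro s a
    rw [hd s a]
    have h2 : ∑ s₀, ∑ a₀, (-(n s₀ a₀)) * M s₀ a₀ s ≤ ∑ s₀, ∑ a₀, d s₀ a₀ * M s₀ a₀ s := by
      refine Finset.sum_le_sum (fun s₀ _ => Finset.sum_le_sum (fun a₀ _ => ?_))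
      refine mul_le_mul_of_nonneg_right ?_ (hM0 s₀ a₀ s)
      simp only [hn]
      rw [neg_le]
      exact le_max_right _ _
    have h3 : ∑ s₀, ∑ a₀, (-(n s₀ a₀)) * M s₀ a₀ s = -(∑ s₀, ∑ a₀, n s₀ a₀ * M s₀ a₀ s) := by
      rw [← Finset.sum_neg_distrib]
      refine Finset.sum_congr rfl (fun s₀ _ => ?_)
      rw [← Finset.sum_neg_distrib]
      exact Finset.sum_congr rfl (fun a₀ _ => by ring)
    rw [h3] at h2
    have h4 : 0 ≤ ρ s a * ((1 - γ) * μ s) := by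
      apply mul_nonneg (hρ0 s a); apply mul_nonneg h1γ.le (hμ0 s)
    nlinarith [mul_le_mul_of_nonneg_left h2 (mul_nonneg hγ0 (hρ0 s a))]
  have hnle : ∀ s a, n s a ≤ γ * (ρ s a * ∑ s₀, ∑ a₀, n s₀ a₀ * M s₀ a₀ s) := by
    intro s a
    apply max_le ?_ (hdgen s a)
    apply mul_nonneg hγ0
    apply mul_nonneg (hρ0 s a)
    refine Finset.sum_nonneg (fun s₀ _ => Finset.sum_nonneg (fun a₀ _ => ?_))
    exact mul_nonneg (hn0 s₀ a₀) (hM0 s₀ a₀ s)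
  set N := ∑ s, ∑ a, n s a with hN
  have hN0 : 0 ≤ N := Finset.sum_nonneg (fun s _ => Finset.sum_nonneg (fun a _ => hn0 s a))
  have hNle : N ≤ γ * N := by
    calc N ≤ ∑ s, ∑ a, γ * (ρ s a * ∑ s₀, ∑ a₀, n s₀ a₀ * M s₀ a₀ s) := by
          exact Finset.sum_le_sum (fun s _ => Finset.sum_le_sum (fun a _ => hnle s a))
      _ = γ * ∑ s, (∑ a, ρ s a) * (∑ s₀, ∑ a₀, n s₀ a₀ * M s₀ a₀ s) := by
          rw [Finset.mul_sum]
          refine Finset.sum_congr rfl (fun s _ => ?_)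
          rw [Finset.sum_mul, Finset.mul_sum]
      _ = γ * ∑ s, (∑ s₀, ∑ a₀, n s₀ a₀ * M s₀ a₀ s) := by
          congr 1
          exact Finset.sum_congr rfl (fun s _ => by rw [hρ1 s, one_mul])
      _ = γ * ∑ s₀, ∑ a₀, n s₀ a₀ * (∑ s, M s₀ a₀ s) := by
          congr 1
          rw [Finset.sum_comm]
          refine Finset.sum_congr rfl (fun s₀ _ => ?_)
          rw [Finset.sum_comm]
          refine Finset.sum_congr rfl (fun a₀ _ => ?_)
          rw [Finset.mul_sum]
      _ = γ * N := by
          congr 1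
          rw [hN]
          refine Finset.sum_congr rfl (fun s₀ _ => Finset.sum_congr rfl (fun a₀ _ => ?_))
          rw [hM1 s₀ a₀, mul_one]
  have hNzero : N = 0 := by nlinarith
  have hd0 : ∀ s a, 0 ≤ d s a := by
    intro s a
    have h5 : n s a = 0 := by
      have h6 : ∀ s' ∈ (Finset.univ : Finset S), (0:ℝ) ≤ ∑ a, n s' a :=
        fun s' _ => Finset.sum_nonneg (fun a _ => hn0 s' a)
      have h7 : ∑ a, n s a = 0 := by
        have := (Finset.sum_eq_zero_iff_of_nonneg h6).1 hNzero s (Finset.mem_univ s)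
        exact this
      have h8 : ∀ a' ∈ (Finset.univ : Finset A), (0:ℝ) ≤ n s a' := fun a' _ => hn0 s a'
      exact (Finset.sum_eq_zero_iff_of_nonneg h8).1 h7 a (Finset.mem_univ a)
    have h9 : -(d s a) ≤ 0 := by
      calc -(d s a) ≤ max 0 (-(d s a)) := le_max_right _ _
        _ = 0 := h5
    linarith
  refine ⟨hd0, ?_⟩
  -- total mass
  set T := ∑ s, ∑ a, d s a with hT
  have hTeq : T = (1 - γ) + γ * T := by
    calc T = ∑ s, (∑ a, ρ s a) * ((1 - γ) * μ s + γ * ∑ s₀, ∑ a₀, d s₀ a₀ * M s₀ a₀ s) := by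
          refine Finset.sum_congr rfl (fun s _ => ?_)
          rw [Finset.sum_mul]
          exact Finset.sum_congr rfl (fun a _ => by rw [hd s a])
      _ = ∑ s, ((1 - γ) * μ s + γ * ∑ s₀, ∑ a₀, d s₀ a₀ * M s₀ a₀ s) := by
          exact Finset.sum_congr rfl (fun s _ => by rw [hρ1 s, one_mul])
      _ = (1 - γ) * ∑ s, μ s + γ * ∑ s, ∑ s₀, ∑ a₀, d s₀ a₀ * M s₀ a₀ s := by
          rw [Finset.sum_add_distrib, ← Finset.mul_sum, ← Finset.mul_sum]
      _ = (1 - γ) + γ * ∑ s₀, ∑ a₀, d s₀ a₀ * (∑ s, M s₀ a₀ s) := by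
          rw [hμ1, mul_one]
          congr 2
          rw [Finset.sum_comm]
          refine Finset.sum_congr rfl (fun s₀ _ => ?_)
          rw [Finset.sum_comm]
          exact Finset.sum_congr rfl (fun a₀ _ => by rw [Finset.mul_sum])
      _ = (1 - γ) + γ * T := by
          congr 2
          refine Finset.sum_congr rfl (fun s₀ _ => Finset.sum_congr rfl (fun a₀ _ => ?_))
          rw [hM1 s₀ a₀, mul_one]
  have : (1 - γ) * T = (1 - γ) * 1 := by linarith
  exact mul_left_cancel₀ (by linarith : (1:ℝ) - γ ≠ 0) this


lemma sum_comm3 {S A : Type} [Fintype S] [Fintype A] (g : S → S → A → ℝ) :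
    ∑ s : S, ∑ s₀ : S, ∑ a₀ : A, g s s₀ a₀ = ∑ s₀ : S, ∑ a₀ : A, ∑ s : S, g s s₀ a₀ := by
  rw [Finset.sum_comm]
  exact Finset.sum_congr rfl (fun s₀ _ => Finset.sum_comm)

lemma flow_swap {S A : Type} [Fintype S] [Fintype A] (d : S → A → ℝ) (P : S → A → S → ℝ)
    (V : S → ℝ) :
    ∑ s, (∑ s₀, ∑ a₀, d s₀ a₀ * P s₀ a₀ s) * V s
      = ∑ s₀, ∑ a₀, d s₀ a₀ * ∑ s, P s₀ a₀ s * V s := by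
  have h1 : ∀ s : S, (∑ s₀, ∑ a₀, d s₀ a₀ * P s₀ a₀ s) * V s
      = ∑ s₀, ∑ a₀, d s₀ a₀ * P s₀ a₀ s * V s := by
    intro s
    rw [Finset.sum_mul]
    exact Finset.sum_congr rfl (fun s₀ _ => by rw [Finset.sum_mul])
  rw [Finset.sum_congr rfl (fun s _ => h1 s), sum_comm3]
  refine Finset.sum_congr rfl (fun s₀ _ => Finset.sum_congr rfl (fun a₀ _ => ?_))
  rw [Finset.mul_sum]
  exact Finset.sum_congr rfl (fun s _ => by ring)

/-- Consistency of occupancy-based and value-based returns. -/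
lemma return_eq {S A : Type} [Fintype S] [Fintype A]
    (P : S → A → S → ℝ) (pi : S → A → ℝ) (R : S → A → ℝ) (μ : S → ℝ) (γ : ℝ)
    (d : S → A → ℝ) (V : S → ℝ)
    (hd : ∀ s a, d s a = pi s a * ((1 - γ) * μ s + γ * ∑ s₀, ∑ a₀, d s₀ a₀ * P s₀ a₀ s))
    (hV : ∀ s, V s = ∑ a, pi s a * (R s a + γ * ∑ s', P s a s' * V s')) :
    ∑ s, ∑ a, d s a * R s a = (1 - γ) * ∑ s, μ s * V s := by
  set w : S → ℝ := fun s => (1 - γ) * μ s + γ * ∑ s₀, ∑ a₀, d s₀ a₀ * P s₀ a₀ s with hw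
  have hdw : ∀ s a, d s a = pi s a * w s := hd
  have e1 : ∑ s, ∑ a, d s a * (R s a + γ * ∑ s', P s a s' * V s') = ∑ s, w s * V s := by
    refine Finset.sum_congr rfl (fun s _ => ?_)
    rw [hV s, Finset.mul_sum]
    refine Finset.sum_congr rfl (fun a _ => ?_)
    rw [hdw s a]; ring
  have e2 : ∑ s, w s * V s = (1 - γ) * ∑ s, μ s * V s
      + γ * ∑ s₀, ∑ a₀, d s₀ a₀ * ∑ s, P s₀ a₀ s * V s := by
    have h2 : ∀ s : S, w s * V s = (1 - γ) * (μ s * V s)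
        + γ * ((∑ s₀, ∑ a₀, d s₀ a₀ * P s₀ a₀ s) * V s) := by
      intro s; rw [hw]; ring
    rw [Finset.sum_congr rfl (fun s _ => h2 s), Finset.sum_add_distrib,
      ← Finset.mul_sum, ← Finset.mul_sum, flow_swap]
  have e3 : ∑ s, ∑ a, d s a * (R s a + γ * ∑ s', P s a s' * V s')
      = ∑ s, ∑ a, d s a * R s a + γ * ∑ s, ∑ a, d s a * ∑ s', P s a s' * V s' := by
    rw [Finset.mul_sum, ← Finset.sum_add_distrib]
    refine Finset.sum_congr rfl (fun s _ => ?_)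
    rw [Finset.mul_sum, ← Finset.sum_add_distrib]
    refine Finset.sum_congr rfl (fun a _ => by ring)
  have := e1
  rw [e3, e2] at this
  linarith [this]

/-- Generalized advantage identity. -/
lemma adv_eq {S A : Type} [Fintype S] [Fintype A]
    (M P : S → A → S → ℝ) (pi pib : S → A → ℝ) (R : S → A → ℝ) (μ : S → ℝ) (γ : ℝ)
    (d : S → A → ℝ) (w : S → ℝ) (V : S → ℝ) (Q : S → A → ℝ)
    (hw : ∀ s, w s = (1 - γ) * μ s + γ * ∑ s₀, ∑ a₀, d s₀ a₀ * M s₀ a₀ s)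
    (hd : ∀ s a, d s a = pib s a * w s)
    (hQ : ∀ s a, Q s a = R s a + γ * ∑ s', P s a s' * V s')
    (hV : ∀ s, V s = ∑ a, pi s a * Q s a) :
    ∑ s, w s * ∑ a, (pi s a - pib s a) * Q s a
      = (1 - γ) * ∑ s, μ s * V s
        - γ * ∑ s, ∑ a, d s a * ∑ s', (P s a s' - M s a s') * V s'
        - ∑ s, ∑ a, d s a * R s a := by
  have eπ : ∑ s, w s * ∑ a, pi s a * Q s a = ∑ s, w s * V s := by
    refine Finset.sum_congr rfl (fun s _ => by rw [← hV s])
  have e2 : ∑ s, w s * V s = (1 - γ) * ∑ s, μ s * V s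
      + γ * ∑ s₀, ∑ a₀, d s₀ a₀ * ∑ s, M s₀ a₀ s * V s := by
    have h2 : ∀ s : S, w s * V s = (1 - γ) * (μ s * V s)
        + γ * ((∑ s₀, ∑ a₀, d s₀ a₀ * M s₀ a₀ s) * V s) := by
      intro s; rw [hw]; ring
    rw [Finset.sum_congr rfl (fun s _ => h2 s), Finset.sum_add_distrib,
      ← Finset.mul_sum, ← Finset.mul_sum, flow_swap]
  have eb : ∑ s, w s * ∑ a, pib s a * Q s a = ∑ s, ∑ a, d s a * Q s a := by
    refine Finset.sum_congr rfl (fun s _ => ?_)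
    rw [Finset.mul_sum]
    refine Finset.sum_congr rfl (fun a _ => by rw [hd s a]; ring)
  have e4 : ∑ s, ∑ a, d s a * Q s a
      = ∑ s, ∑ a, d s a * R s a + γ * ∑ s, ∑ a, d s a * ∑ s', P s a s' * V s' := by
    rw [Finset.mul_sum, ← Finset.sum_add_distrib]
    refine Finset.sum_congr rfl (fun s _ => ?_)
    rw [Finset.mul_sum, ← Finset.sum_add_distrib]
    refine Finset.sum_congr rfl (fun a _ => by rw [hQ s a]; ring)
  have e5 : ∑ s, ∑ a, d s a * ∑ s', (P s a s' - M s a s') * V s'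
      = ∑ s, ∑ a, d s a * ∑ s', P s a s' * V s'
        - ∑ s, ∑ a, d s a * ∑ s', M s a s' * V s' := by
    rw [← Finset.sum_sub_distrib]
    refine Finset.sum_congr rfl (fun s _ => ?_)
    rw [← Finset.sum_sub_distrib]
    refine Finset.sum_congr rfl (fun a _ => ?_)
    rw [← mul_sub, ← Finset.sum_sub_distrib]
    congr 1
    exact Finset.sum_congr rfl (fun s' _ => by ring)
  have e6 : ∑ s, w s * ∑ a, (pi s a - pib s a) * Q s a
      = ∑ s, w s * ∑ a, pi s a * Q s a - ∑ s, w s * ∑ a, pib s a * Q s a := by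
    rw [← Finset.sum_sub_distrib]
    refine Finset.sum_congr rfl (fun s _ => ?_)
    rw [← mul_sub, ← Finset.sum_sub_distrib]
    congr 1
    exact Finset.sum_congr rfl (fun a _ => by ring)
  rw [e6, eπ, e2, eb, e4, e5]
  ring


end SimLemmaAux

open SimLemmaAux in
/-- Simulation lemma with policy shift (Lemma 3 of Xu et al.): if the model KL
error under the behavior occupancy is at most ε_M̂ and the policy divergence is
at most ε_π, then |J_{M̂}(π) − J_M(π)| ≤ (√2 γ R_max/(1−γ)²)√ε_M̂ +
(2√2 γ R_max/(1−γ)²)√ε_π. Occupancies are characterized by Bellman flow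
equations and J_N(ρ) = (1/(1−γ)) Σ d_N^ρ R. -/
theorem simulation_lemma_policy_shift {S A : Type} [Fintype S] [Fintype A]
    (M Mhat : S → A → S → ℝ) (π πb : S → A → ℝ) (R : S → A → ℝ) (μ : S → ℝ)
    (γ Rmax εM επ : ℝ) (hγ0 : 0 ≤ γ) (hγ1 : γ < 1)
    (hM0 : ∀ s a s', 0 ≤ M s a s') (hM1 : ∀ s a, ∑ s', M s a s' = 1)
    (hMh0 : ∀ s a s', 0 ≤ Mhat s a s') (hMh1 : ∀ s a, ∑ s', Mhat s a s' = 1)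
    (hπ0 : ∀ s a, 0 ≤ π s a) (hπ1 : ∀ s, ∑ a, π s a = 1)
    (hπb0 : ∀ s a, 0 ≤ πb s a) (hπb1 : ∀ s, ∑ a, πb s a = 1)
    (hμ0 : ∀ s, 0 ≤ μ s) (hμ1 : ∑ s, μ s = 1)
    (hRmax : ∀ s a, |R s a| ≤ Rmax)
    -- absolute continuity so the KL divergences are well defined
    (hacM : ∀ s a s', 0 < M s a s' → 0 < Mhat s a s')
    (hacπ : ∀ s a, 0 < π s a → 0 < πb s a)
    -- normalized occupancy of the behavior policy π_b under the true dynamics M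
    (dMb : S → A → ℝ)
    (hdMb : ∀ s a, dMb s a =
      πb s a * ((1 - γ) * μ s + γ * ∑ s₀, ∑ a₀, dMb s₀ a₀ * M s₀ a₀ s))
    -- model error under the behavior occupancy, and policy divergence
    (hεM : (∑ s, ∑ a, dMb s a * ∑ s', M s a s' * Real.log (M s a s' / Mhat s a s')) ≤ εM)
    (hεπ : ∀ s, (∑ a, π s a * Real.log (π s a / πb s a)) ≤ επ)
    -- returns of π under the learned model M̂ and under the true dynamics M
    (dhat dMpi : S → A → ℝ)
    (hdhat : ∀ s a, dhat s a =
      π s a * ((1 - γ) * μ s + γ * ∑ s₀, ∑ a₀, dhat s₀ a₀ * Mhat s₀ a₀ s))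
    (hdMpi : ∀ s a, dMpi s a =
      π s a * ((1 - γ) * μ s + γ * ∑ s₀, ∑ a₀, dMpi s₀ a₀ * M s₀ a₀ s))
    (Jhat JM : ℝ)
    (hJhat : Jhat = (1 / (1 - γ)) * ∑ s, ∑ a, dhat s a * R s a)
    (hJM : JM = (1 / (1 - γ)) * ∑ s, ∑ a, dMpi s a * R s a) :
    |Jhat - JM| ≤
      (Real.sqrt 2 * γ * Rmax / (1 - γ) ^ 2) * Real.sqrt εM +
        (2 * Real.sqrt 2 * γ * Rmax / (1 - γ) ^ 2) * Real.sqrt επ := by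
  have h1γ : 0 < 1 - γ := by linarith
  -- nonemptiness
  have hS : Nonempty S := by
    by_contra h
    rw [not_nonempty_iff] at h
    rw [Finset.univ_eq_empty, Finset.sum_empty] at hμ1
    norm_num at hμ1
  have hA : Nonempty A := by
    by_contra h
    rw [not_nonempty_iff] at h
    have := hπ1 (Classical.arbitrary S)
    rw [Finset.univ_eq_empty, Finset.sum_empty] at this
    norm_num at this
  have hRmax0 : 0 ≤ Rmax :=
    le_trans (abs_nonneg _) (hRmax (Classical.arbitrary S) (Classical.arbitrary A))
  set Vmax := Rmax / (1 - γ) with hVmaxdef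
  have hVmax0 : 0 ≤ Vmax := div_nonneg hRmax0 h1γ.le
  -- occupancy of the behaviour policy
  obtain ⟨hd0, hdsum⟩ := occ_props M πb μ γ hγ0 hγ1 hM0 hM1 hπb0 hπb1 hμ0 hμ1 dMb hdMb
  set w : S → ℝ := fun s => (1 - γ) * μ s + γ * ∑ s₀, ∑ a₀, dMb s₀ a₀ * M s₀ a₀ s with hw
  have hdw : ∀ s a, dMb s a = πb s a * w s := hdMb
  have hw0 : ∀ s, 0 ≤ w s := by
    intro s
    have h2 : 0 ≤ ∑ s₀, ∑ a₀, dMb s₀ a₀ * M s₀ a₀ s :=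
      Finset.sum_nonneg (fun s₀ _ => Finset.sum_nonneg
        (fun a₀ _ => mul_nonneg (hd0 s₀ a₀) (hM0 s₀ a₀ s)))
    have h3 : 0 ≤ (1 - γ) * μ s := mul_nonneg h1γ.le (hμ0 s)
    simp only [hw]
    have h4 : 0 ≤ γ * ∑ s₀, ∑ a₀, dMb s₀ a₀ * M s₀ a₀ s := mul_nonneg hγ0 h2
    linarith
  have hwsum : ∑ s, w s = 1 := by
    calc ∑ s, w s = ∑ s, (∑ a, πb s a) * w s := by
          refine Finset.sum_congr rfl (fun s _ => by rw [hπb1 s, one_mul])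
      _ = ∑ s, ∑ a, dMb s a := by
          refine Finset.sum_congr rfl (fun s _ => ?_)
          rw [Finset.sum_mul]
          exact Finset.sum_congr rfl (fun a _ => (hdw s a).symm)
      _ = 1 := hdsum
  -- value functions
  obtain ⟨Vh, hVh, hVhb⟩ := exists_value Mhat π R γ Rmax hγ0 hγ1 hMh0 hMh1 hπ0 hπ1 hRmax
  obtain ⟨Vm, hVm, hVmb⟩ := exists_value M π R γ Rmax hγ0 hγ1 hM0 hM1 hπ0 hπ1 hRmax
  set Qh : S → A → ℝ := fun s a => R s a + γ * ∑ s', Mhat s a s' * Vh s' with hQh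
  set Qm : S → A → ℝ := fun s a => R s a + γ * ∑ s', M s a s' * Vm s' with hQm
  have hVQh : ∀ s, Vh s = ∑ a, π s a * Qh s a := hVh
  have hVQm : ∀ s, Vm s = ∑ a, π s a * Qm s a := hVm
  -- returns in value form
  have hJhat' : Jhat = ∑ s, μ s * Vh s := by
    rw [hJhat, return_eq Mhat π R μ γ dhat Vh hdhat hVh]
    field_simp
  have hJM' : JM = ∑ s, μ s * Vm s := by
    rw [hJM, return_eq M π R μ γ dMpi Vm hdMpi hVm]
    field_simp
  -- the two advantage identities
  have hadv1 := adv_eq M Mhat π πb R μ γ dMb w Vh Qh (fun s => rfl) hdw (fun s a => rfl) hVQh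
  have hadv2 := adv_eq M M π πb R μ γ dMb w Vm Qm (fun s => rfl) hdw (fun s a => rfl) hVQm
  have hzero : ∑ s, ∑ a, dMb s a * ∑ s', (M s a s' - M s a s') * Vm s' = 0 := by
    refine Finset.sum_eq_zero (fun s _ => Finset.sum_eq_zero (fun a _ => ?_))
    simp
  rw [hzero] at hadv2
  -- master identity
  have master : (1 - γ) * (Jhat - JM)
      = γ * ∑ s, ∑ a, dMb s a * ∑ s', (Mhat s a s' - M s a s') * Vh s'
        + ∑ s, w s * ∑ a, (π s a - πb s a) * (Qh s a - Qm s a) := by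
    have hsplit : ∑ s, w s * ∑ a, (π s a - πb s a) * (Qh s a - Qm s a)
        = ∑ s, w s * ∑ a, (π s a - πb s a) * Qh s a
          - ∑ s, w s * ∑ a, (π s a - πb s a) * Qm s a := by
      rw [← Finset.sum_sub_distrib]
      refine Finset.sum_congr rfl (fun s _ => ?_)
      rw [← mul_sub, ← Finset.sum_sub_distrib]
      congr 1
      exact Finset.sum_congr rfl (fun a _ => by ring)
    rw [hsplit, hadv1, hadv2, hJhat', hJM']
    ring
  -- bounds
  -- Term A
  have pinskerM : ∀ s a, ∑ s', |M s a s' - Mhat s a s'|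
      ≤ Real.sqrt (2 * ∑ s', M s a s' * Real.log (M s a s' / Mhat s a s')) := by
    intro s a
    exact pinsker (fun s' => M s a s') (fun s' => Mhat s a s') (hM0 s a) (hMh0 s a)
      (hM1 s a) (hMh1 s a) (hacM s a)
  have klM0 : ∀ s a, 0 ≤ ∑ s', M s a s' * Real.log (M s a s' / Mhat s a s') := by
    intro s a
    exact kl_nonneg (fun s' => M s a s') (fun s' => Mhat s a s') (hM0 s a) (hMh0 s a)
      (hM1 s a) (hMh1 s a) (hacM s a)
  have hTA : |∑ s, ∑ a, dMb s a * ∑ s', (Mhat s a s' - M s a s') * Vh s'|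
      ≤ Vmax * Real.sqrt (2 * εM) := by
    set KL : S → A → ℝ := fun s a => ∑ s', M s a s' * Real.log (M s a s' / Mhat s a s')
      with hKL
    have step1 : |∑ s, ∑ a, dMb s a * ∑ s', (Mhat s a s' - M s a s') * Vh s'|
        ≤ ∑ s, ∑ a, dMb s a * (Real.sqrt (2 * KL s a) * Vmax) := by
      calc |∑ s, ∑ a, dMb s a * ∑ s', (Mhat s a s' - M s a s') * Vh s'|
          ≤ ∑ s, |∑ a, dMb s a * ∑ s', (Mhat s a s' - M s a s') * Vh s'| :=
            Finset.abs_sum_le_sum_abs _ _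
        _ ≤ ∑ s, ∑ a, |dMb s a * ∑ s', (Mhat s a s' - M s a s') * Vh s'| :=
            Finset.sum_le_sum (fun s _ => Finset.abs_sum_le_sum_abs _ _)
        _ ≤ ∑ s, ∑ a, dMb s a * (Real.sqrt (2 * KL s a) * Vmax) := by
            refine Finset.sum_le_sum (fun s _ => Finset.sum_le_sum (fun a _ => ?_))
            rw [abs_mul, abs_of_nonneg (hd0 s a)]
            refine mul_le_mul_of_nonneg_left ?_ (hd0 s a)
            calc |∑ s', (Mhat s a s' - M s a s') * Vh s'|
                ≤ ∑ s', |(Mhat s a s' - M s a s') * Vh s'| := Finset.abs_sum_le_sum_abs _ _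
              _ ≤ ∑ s', |M s a s' - Mhat s a s'| * Vmax := by
                  refine Finset.sum_le_sum (fun s' _ => ?_)
                  rw [abs_mul, abs_sub_comm]
                  exact mul_le_mul_of_nonneg_left (hVhb s') (abs_nonneg _)
              _ = (∑ s', |M s a s' - Mhat s a s'|) * Vmax := (Finset.sum_mul _ _ _).symm
              _ ≤ Real.sqrt (2 * KL s a) * Vmax :=
                  mul_le_mul_of_nonneg_right (pinskerM s a) hVmax0
    have step2 : ∑ s, ∑ a, dMb s a * (Real.sqrt (2 * KL s a) * Vmax)
        = Vmax * ∑ s, ∑ a, dMb s a * Real.sqrt (2 * KL s a) := by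
      rw [Finset.mul_sum]
      refine Finset.sum_congr rfl (fun s _ => ?_)
      rw [Finset.mul_sum]
      exact Finset.sum_congr rfl (fun a _ => by ring)
    have step3 : ∑ s, ∑ a, dMb s a * Real.sqrt (2 * KL s a) ≤ Real.sqrt (2 * εM) := by
      have cs : ∑ p : S × A, Real.sqrt (dMb p.1 p.2) *
            Real.sqrt (dMb p.1 p.2 * (2 * KL p.1 p.2))
          ≤ Real.sqrt (∑ p : S × A, dMb p.1 p.2) *
            Real.sqrt (∑ p : S × A, dMb p.1 p.2 * (2 * KL p.1 p.2)) := by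
        refine Real.sum_sqrt_mul_sqrt_le _ (fun p => hd0 p.1 p.2) (fun p => ?_)
        exact mul_nonneg (hd0 p.1 p.2) (mul_nonneg (by norm_num) (klM0 p.1 p.2))
      have eq1 : ∀ p : S × A, Real.sqrt (dMb p.1 p.2) *
          Real.sqrt (dMb p.1 p.2 * (2 * KL p.1 p.2))
          = dMb p.1 p.2 * Real.sqrt (2 * KL p.1 p.2) := by
        intro p
        rw [← Real.sqrt_mul (hd0 p.1 p.2), ← mul_assoc,
          Real.sqrt_mul (mul_self_nonneg _), Real.sqrt_mul_self (hd0 p.1 p.2)]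
      have eq2 : ∑ p : S × A, dMb p.1 p.2 = 1 := by
        rw [Fintype.sum_prod_type]; exact hdsum
      have eq3 : ∑ p : S × A, dMb p.1 p.2 * (2 * KL p.1 p.2)
          = 2 * ∑ s, ∑ a, dMb s a * KL s a := by
        rw [Fintype.sum_prod_type, Finset.mul_sum]
        refine Finset.sum_congr rfl (fun s _ => ?_)
        rw [Finset.mul_sum]
        exact Finset.sum_congr rfl (fun a _ => by ring)
      rw [Finset.sum_congr rfl (fun p _ => eq1 p), eq2, Real.sqrt_one, one_mul, eq3] at cs
      calc ∑ s, ∑ a, dMb s a * Real.sqrt (2 * KL s a)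
          = ∑ p : S × A, dMb p.1 p.2 * Real.sqrt (2 * KL p.1 p.2) :=
            (Fintype.sum_prod_type
              (f := fun p : S × A => dMb p.1 p.2 * Real.sqrt (2 * KL p.1 p.2))).symm
        _ ≤ Real.sqrt (2 * ∑ s, ∑ a, dMb s a * KL s a) := cs
        _ ≤ Real.sqrt (2 * εM) := by
            apply Real.sqrt_le_sqrt
            have : ∑ s, ∑ a, dMb s a * KL s a ≤ εM := hεM
            linarith
    calc |∑ s, ∑ a, dMb s a * ∑ s', (Mhat s a s' - M s a s') * Vh s'|
        ≤ ∑ s, ∑ a, dMb s a * (Real.sqrt (2 * KL s a) * Vmax) := step1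
      _ = Vmax * ∑ s, ∑ a, dMb s a * Real.sqrt (2 * KL s a) := step2
      _ ≤ Vmax * Real.sqrt (2 * εM) := mul_le_mul_of_nonneg_left step3 hVmax0
  -- Term B
  have hQdiff : ∀ s a, |Qh s a - Qm s a| ≤ 2 * γ * Vmax := by
    intro s a
    have h1 : Qh s a - Qm s a
        = γ * ((∑ s', Mhat s a s' * Vh s') - ∑ s', M s a s' * Vm s') := by
      rw [hQh, hQm]; ring
    rw [h1, abs_mul, abs_of_nonneg hγ0]
    have h2 : |(∑ s', Mhat s a s' * Vh s') - ∑ s', M s a s' * Vm s'| ≤ 2 * Vmax := by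
      have b1 : |∑ s', Mhat s a s' * Vh s'| ≤ Vmax := by
        calc |∑ s', Mhat s a s' * Vh s'| ≤ ∑ s', |Mhat s a s' * Vh s'| :=
              Finset.abs_sum_le_sum_abs _ _
          _ ≤ ∑ s', Mhat s a s' * Vmax := by
              refine Finset.sum_le_sum (fun s' _ => ?_)
              rw [abs_mul, abs_of_nonneg (hMh0 s a s')]
              exact mul_le_mul_of_nonneg_left (hVhb s') (hMh0 s a s')
          _ = Vmax := by rw [← Finset.sum_mul, hMh1 s a, one_mul]
      have b2 : |∑ s', M s a s' * Vm s'| ≤ Vmax := by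
        calc |∑ s', M s a s' * Vm s'| ≤ ∑ s', |M s a s' * Vm s'| :=
              Finset.abs_sum_le_sum_abs _ _
          _ ≤ ∑ s', M s a s' * Vmax := by
              refine Finset.sum_le_sum (fun s' _ => ?_)
              rw [abs_mul, abs_of_nonneg (hM0 s a s')]
              exact mul_le_mul_of_nonneg_left (hVmb s') (hM0 s a s')
          _ = Vmax := by rw [← Finset.sum_mul, hM1 s a, one_mul]
      calc |(∑ s', Mhat s a s' * Vh s') - ∑ s', M s a s' * Vm s'|
          ≤ |∑ s', Mhat s a s' * Vh s'| + |∑ s', M s a s' * Vm s'| := abs_sub _ _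
        _ ≤ 2 * Vmax := by linarith
    nlinarith [h2, hγ0]
  have pinskerπ : ∀ s, ∑ a, |π s a - πb s a| ≤ Real.sqrt (2 * επ) := by
    intro s
    have h1 := pinsker (fun a => π s a) (fun a => πb s a) (hπ0 s) (hπb0 s)
      (hπ1 s) (hπb1 s) (hacπ s)
    refine le_trans h1 (Real.sqrt_le_sqrt ?_)
    have := hεπ s
    linarith
  have hTB : |∑ s, w s * ∑ a, (π s a - πb s a) * (Qh s a - Qm s a)|
      ≤ Real.sqrt (2 * επ) * (2 * γ * Vmax) := by
    calc |∑ s, w s * ∑ a, (π s a - πb s a) * (Qh s a - Qm s a)|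
        ≤ ∑ s, |w s * ∑ a, (π s a - πb s a) * (Qh s a - Qm s a)| :=
          Finset.abs_sum_le_sum_abs _ _
      _ ≤ ∑ s, w s * (Real.sqrt (2 * επ) * (2 * γ * Vmax)) := by
          refine Finset.sum_le_sum (fun s _ => ?_)
          rw [abs_mul, abs_of_nonneg (hw0 s)]
          refine mul_le_mul_of_nonneg_left ?_ (hw0 s)
          calc |∑ a, (π s a - πb s a) * (Qh s a - Qm s a)|
              ≤ ∑ a, |(π s a - πb s a) * (Qh s a - Qm s a)| := Finset.abs_sum_le_sum_abs _ _
            _ ≤ ∑ a, |π s a - πb s a| * (2 * γ * Vmax) := by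
                refine Finset.sum_le_sum (fun a _ => ?_)
                rw [abs_mul]
                exact mul_le_mul_of_nonneg_left (hQdiff s a) (abs_nonneg _)
            _ = (∑ a, |π s a - πb s a|) * (2 * γ * Vmax) := (Finset.sum_mul _ _ _).symm
            _ ≤ Real.sqrt (2 * επ) * (2 * γ * Vmax) := by
                refine mul_le_mul_of_nonneg_right (pinskerπ s) ?_
                positivity
      _ = Real.sqrt (2 * επ) * (2 * γ * Vmax) := by
          rw [← Finset.sum_mul, hwsum, one_mul]
  -- assembly
  have final1 : (1 - γ) * |Jhat - JM|
      ≤ γ * (Vmax * Real.sqrt (2 * εM)) + Real.sqrt (2 * επ) * (2 * γ * Vmax) := by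
    have h1 : (1 - γ) * |Jhat - JM| = |(1 - γ) * (Jhat - JM)| := by
      rw [abs_mul, abs_of_pos h1γ]
    rw [h1, master]
    calc |γ * ∑ s, ∑ a, dMb s a * ∑ s', (Mhat s a s' - M s a s') * Vh s'
          + ∑ s, w s * ∑ a, (π s a - πb s a) * (Qh s a - Qm s a)|
        ≤ |γ * ∑ s, ∑ a, dMb s a * ∑ s', (Mhat s a s' - M s a s') * Vh s'|
          + |∑ s, w s * ∑ a, (π s a - πb s a) * (Qh s a - Qm s a)| := abs_add_le _ _
      _ ≤ γ * (Vmax * Real.sqrt (2 * εM)) + Real.sqrt (2 * επ) * (2 * γ * Vmax) := by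
          refine add_le_add ?_ hTB
          rw [abs_mul, abs_of_nonneg hγ0]
          exact mul_le_mul_of_nonneg_left hTA hγ0
  have hsq2M : Real.sqrt (2 * εM) = Real.sqrt 2 * Real.sqrt εM :=
    Real.sqrt_mul (by norm_num) _
  have hsq2π : Real.sqrt (2 * επ) = Real.sqrt 2 * Real.sqrt επ :=
    Real.sqrt_mul (by norm_num) _
  rw [hsq2M, hsq2π, hVmaxdef] at final1
  have htarget : (Real.sqrt 2 * γ * Rmax / (1 - γ) ^ 2) * Real.sqrt εM +
      (2 * Real.sqrt 2 * γ * Rmax / (1 - γ) ^ 2) * Real.sqrt επ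
      = (γ * (Rmax / (1 - γ) * (Real.sqrt 2 * Real.sqrt εM))
          + Real.sqrt 2 * Real.sqrt επ * (2 * γ * (Rmax / (1 - γ)))) / (1 - γ) := by
    field_simp
  rw [htarget, le_div_iff₀ h1γ]
  calc |Jhat - JM| * (1 - γ) = (1 - γ) * |Jhat - JM| := by ring
    _ ≤ _ := final1
end
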